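/- Let |X| = n, |Y| = m, |Z| = k with Z ⊆ Y ⊆ X finite nonempty. For each 1 ≤ r ≤ k, the number of α ∈ T(X,Y,Z) with |α(Y)| = r equals C(k,r) · r! · S(m,r) · n^(n−m), where S(m,r) is the Stirling number of the second kind. -/

import Mathlib

open Finset Function

/-- Stirling numbers of the second kind. -/
def stirling2 : ℕ → ℕ → ℕ
  | 0, 0 => 1
  | 0, _ + 1 => 0
  | _ + 1, 0 => 0
  | n + 1, k + 1 => (k + 1) * stirling2 n (k + 1) + stirling2 n k


def surjFin (m j : ℕ) : ℕ :=
  Fintype.card {f : Fin m → Fin j // Finset.image f Finset.univ = Finset.univ}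

lemma imgU_iff {β γ : Type*} [Fintype β] [Fintype γ] [DecidableEq γ] (f : β → γ) :
    Finset.image f Finset.univ = Finset.univ ↔ Surjective f := by
  constructor
  · intro h y
    have : y ∈ Finset.image f Finset.univ := h ▸ Finset.mem_univ y
    simpa using this
  · exact Finset.image_univ_of_surjective

lemma card_image_eq_target {β γ : Type*} [Fintype β] [DecidableEq β] [Fintype γ] [DecidableEq γ]
    (s : Finset γ) :
    Fintype.card {f : β → γ // Finset.image f Finset.univ = s}
      = surjFin (Fintype.card β) s.card := by
  have e1 : {f : β → γ // Finset.image f Finset.univ = s}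
      ≃ {g : β → {x // x ∈ s} // Surjective g} := by
    refine ⟨fun ⟨f, hf⟩ => ⟨fun x => ⟨f x, by rw [← hf]; exact Finset.mem_image_of_mem _ (Finset.mem_univ x)⟩, ?_⟩,
      fun ⟨g, hg⟩ => ⟨fun x => (g x).1, ?_⟩, ?_, ?_⟩
    · rintro ⟨y, hy⟩
      rw [← hf] at hy
      obtain ⟨x, -, hx⟩ := Finset.mem_image.mp hy
      exact ⟨x, Subtype.ext hx⟩
    · ext y
      simp only [Finset.mem_image, Finset.mem_univ, true_and]
      constructor
      · rintro ⟨x, rfl⟩; exact (g x).2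
      · intro hy; obtain ⟨x, hx⟩ := hg ⟨y, hy⟩; exact ⟨x, congrArg Subtype.val hx⟩
    · rintro ⟨f, hf⟩; rfl
    · rintro ⟨g, hg⟩; apply Subtype.ext; funext x; apply Subtype.ext; rfl
  rw [Fintype.card_congr e1]
  have eβ : β ≃ Fin (Fintype.card β) := Fintype.equivFin β
  have eγ : {x // x ∈ s} ≃ Fin s.card := by
    apply Fintype.equivFinOfCardEq; simp
  have e2 : {g : β → {x // x ∈ s} // Surjective g}
      ≃ {h : Fin (Fintype.card β) → Fin s.card // Surjective h} := by
    refine Equiv.subtypeEquiv (Equiv.arrowCongr eβ eγ) (fun g => ?_)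
    constructor
    · intro hg
      have : Surjective (eγ ∘ g ∘ eβ.symm) :=
        eγ.surjective.comp (hg.comp eβ.symm.surjective)
      convert this using 1
      rfl
    · intro hg y
      have h2 : Surjective (⇑eγ ∘ g ∘ ⇑eβ.symm) := hg
      obtain ⟨x, hx⟩ := h2 (eγ y)
      exact ⟨eβ.symm x, eγ.injective hx⟩
  rw [Fintype.card_congr e2, surjFin]
  exact Fintype.card_congr (Equiv.subtypeEquivRight fun h => (imgU_iff h).symm)

lemma card_image_card_eq (m j r : ℕ) :
    Fintype.card {f : Fin m → Fin j // (Finset.image f Finset.univ).card = r}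
      = j.choose r * surjFin m r := by
  classical
  rw [Fintype.card_subtype]
  rw [Finset.card_eq_sum_card_fiberwise
    (f := fun f : Fin m → Fin j => Finset.image f Finset.univ)
    (t := Finset.powersetCard r Finset.univ)
    (fun f hf => by
      simp only [Finset.mem_coe, Finset.mem_filter] at hf
      exact Finset.mem_powersetCard.mpr ⟨Finset.subset_univ _, hf.2⟩)]
  have key : ∀ b ∈ Finset.powersetCard r (Finset.univ : Finset (Fin j)),
      (Finset.filter (fun f : Fin m → Fin j => Finset.image f Finset.univ = b)
        (Finset.filter (fun f => (Finset.image f Finset.univ).card = r) Finset.univ)).card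
      = surjFin m r := by
    intro b hb
    obtain ⟨-, hbc⟩ := Finset.mem_powersetCard.mp hb
    rw [Finset.filter_filter]
    have heq : ∀ f : Fin m → Fin j,
        ((Finset.image f Finset.univ).card = r ∧ Finset.image f Finset.univ = b)
          ↔ Finset.image f Finset.univ = b := by
      intro f; constructor
      · exact And.right
      · intro h; exact ⟨by rw [h, hbc], h⟩
    rw [Finset.filter_congr (fun f _ => heq f)]
    rw [← Fintype.card_subtype]
    rw [card_image_eq_target b, hbc, Fintype.card_fin]
  rw [Finset.sum_congr rfl key, Finset.sum_const, Finset.card_powersetCard,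
    Finset.card_univ, Fintype.card_fin, smul_eq_mul]

lemma image_cons {m j : ℕ} (c : Fin j) (g : Fin m → Fin j) :
    Finset.image (Fin.cons c g : Fin (m + 1) → Fin j) Finset.univ
      = insert c (Finset.image g Finset.univ) := by
  apply Finset.coe_injective
  simp [Set.image_univ, Fin.range_cons]

lemma surjFin_succ_succ (m r : ℕ) :
    surjFin (m + 1) (r + 1) = (r + 1) * (surjFin m (r + 1) + surjFin m r) := by
  classical
  rw [surjFin]
  have e1 : {f : Fin (m + 1) → Fin (r + 1) // Finset.image f Finset.univ = Finset.univ}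
      ≃ {p : Fin (r + 1) × (Fin m → Fin (r + 1)) //
          insert p.1 (Finset.image p.2 Finset.univ) = Finset.univ} := by
    refine Equiv.subtypeEquiv (p := fun f : Fin (m+1) → Fin (r+1) => Finset.image f Finset.univ = Finset.univ)
      (q := fun p : Fin (r + 1) × (Fin m → Fin (r + 1)) =>
        insert p.1 (Finset.image p.2 Finset.univ) = Finset.univ)
      (Fin.consEquiv (fun _ => Fin (r + 1))).symm (fun f => ?_)
    have hf : Finset.image f Finset.univ
        = insert (f 0) (Finset.image (Fin.tail f) Finset.univ) := by
      conv_lhs => rw [← Fin.cons_self_tail f, image_cons]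
    show Finset.image f Finset.univ = Finset.univ ↔
      insert (f 0) (Finset.image (Fin.tail f) Finset.univ) = Finset.univ
    rw [hf]
  rw [Fintype.card_congr e1,
    Fintype.card_congr (Equiv.subtypeProdEquivSigmaSubtype
      (fun (c : Fin (r + 1)) (g : Fin m → Fin (r + 1)) =>
        insert c (Finset.image g Finset.univ) = Finset.univ)),
    Fintype.card_sigma]
  have hc : ∀ c : Fin (r + 1),
      Fintype.card {g : Fin m → Fin (r + 1) //
        insert c (Finset.image g Finset.univ) = Finset.univ}
      = surjFin m (r + 1) + surjFin m r := by
    intro c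
    have hiff : ∀ g : Fin m → Fin (r + 1),
        insert c (Finset.image g Finset.univ) = Finset.univ ↔
        (Finset.image g Finset.univ = Finset.univ ∨
          Finset.image g Finset.univ = Finset.univ.erase c) := by
      intro g
      constructor
      · intro h
        by_cases hcg : c ∈ Finset.image g Finset.univ
        · left; rw [← h, Finset.insert_eq_self.mpr hcg]
        · right
          apply Finset.ext
          intro x
          simp only [Finset.mem_erase, Finset.mem_univ, and_true]
          constructor
          · intro hx; rintro rfl; exact hcg hx
          · intro hx
            have hx2 : x ∈ insert c (Finset.image g Finset.univ) := h ▸ Finset.mem_univ x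
            rcases Finset.mem_insert.mp hx2 with h' | h'
            · exact absurd h' hx
            · exact h'
      · rintro (h | h) <;> rw [h]
        · exact Finset.insert_eq_self.mpr (Finset.mem_univ c)
        · exact Finset.insert_erase (Finset.mem_univ c)
    rw [Fintype.card_congr (Equiv.subtypeEquivRight hiff)]
    have hdis : Disjoint
        (fun g : Fin m → Fin (r + 1) => Finset.image g Finset.univ = Finset.univ)
        (fun g => Finset.image g Finset.univ = Finset.univ.erase c) := by
      refine Pi.disjoint_iff.mpr fun g => ?_
      rw [Prop.disjoint_iff]
      rintro ⟨h1, h2⟩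
      have : c ∈ Finset.univ.erase c := (h1.symm.trans h2) ▸ Finset.mem_univ c
      exact Finset.notMem_erase c _ this
    rw [Fintype.card_subtype_or_disjoint _ _ hdis]
    congr 1
    rw [card_image_eq_target, Fintype.card_fin, Finset.card_erase_of_mem (Finset.mem_univ c),
      Finset.card_univ, Fintype.card_fin, Nat.add_sub_cancel]
  rw [Finset.sum_congr rfl (fun c _ => hc c), Finset.sum_const, Finset.card_univ,
    Fintype.card_fin, smul_eq_mul]
lemma surjFin_zero_zero : surjFin 0 0 = 1 := by
  rw [surjFin, Fintype.card_eq_one_iff]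
  refine ⟨⟨fun x => x.elim0, by simp [Finset.eq_empty_of_isEmpty]⟩, ?_⟩
  rintro ⟨f, hf⟩
  apply Subtype.ext
  funext x
  exact x.elim0

lemma surjFin_zero_succ (r : ℕ) : surjFin 0 (r + 1) = 0 := by
  rw [surjFin, Fintype.card_eq_zero_iff]
  constructor
  rintro ⟨f, hf⟩
  have : (Finset.univ : Finset (Fin 0)) = ∅ := rfl
  rw [this, Finset.image_empty] at hf
  exact Finset.ne_empty_of_mem (Finset.mem_univ (0 : Fin (r+1))) hf.symm

lemma surjFin_succ_zero (m : ℕ) : surjFin (m + 1) 0 = 0 := by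
  rw [surjFin, Fintype.card_eq_zero_iff]
  constructor
  rintro ⟨f, hf⟩
  exact (f 0).elim0

lemma surjFin_eq (m r : ℕ) : surjFin m r = r.factorial * stirling2 m r := by
  induction m generalizing r with
  | zero =>
    cases r with
    | zero => rw [surjFin_zero_zero]; rfl
    | succ r => rw [surjFin_zero_succ]; simp [stirling2]
  | succ m ih =>
    cases r with
    | zero => rw [surjFin_succ_zero]; simp [stirling2]
    | succ r =>
      rw [surjFin_succ_succ, ih, ih]
      show _ = (r + 1).factorial * ((r + 1) * stirling2 m (r + 1) + stirling2 m r)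
      rw [Nat.factorial_succ]
      ring

lemma card_image_transport {β β' γ γ' : Type*} [Fintype β] [Fintype β'] [Fintype γ]
    [Fintype γ'] [DecidableEq β] [DecidableEq γ] [DecidableEq γ'] (e1 : β ≃ β') (e2 : γ ≃ γ')
    (g : β → γ) :
    (Finset.image (⇑e2 ∘ g ∘ ⇑e1.symm) Finset.univ).card
      = (Finset.image g Finset.univ).card := by
  have h1 : (⇑e2 ∘ g ∘ ⇑e1.symm) = ⇑e2 ∘ (g ∘ ⇑e1.symm) := rfl
  rw [h1, ← Finset.image_image, Finset.card_image_of_injective _ e2.injective,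
    ← Finset.image_image, Finset.image_univ_of_surjective e1.symm.surjective]

/-- The number of α ∈ T(X,Y,Z) with |α(Y)| = r is C(k,r)·r!·S(m,r)·n^(n−m). -/
theorem stmt_16 {X : Type*} [Fintype X] [DecidableEq X] (Y Z : Finset X)
    (hZY : Z ⊆ Y) (hZ : Z.Nonempty)
    (n m k r : ℕ) (hn : Fintype.card X = n) (hm : Y.card = m) (hk : Z.card = k)
    (hr1 : 1 ≤ r) (hrk : r ≤ k) :
    Nat.card {α : X → X // (∀ y ∈ Y, α y ∈ Z) ∧ (Y.image α).card = r} =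
      k.choose r * r.factorial * stirling2 m r * n ^ (n - m) := by
  classical
  rw [Nat.card_eq_fintype_card]
  -- split X into Y and its complement
  have himg : ∀ α : X → X,
      Y.image α = Finset.image (fun y : {x // x ∈ Y} => α y.1) Finset.univ := by
    intro α; ext x; simp
  have e1 : {α : X → X // (∀ y ∈ Y, α y ∈ Z) ∧ (Y.image α).card = r}
      ≃ {p : ({x // x ∈ Y} → X) × ({x // ¬ x ∈ Y} → X) //
          (∀ y : {x // x ∈ Y}, p.1 y ∈ Z) ∧
            (Finset.image p.1 Finset.univ).card = r} := by
    refine Equiv.subtypeEquiv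
      ((Equiv.arrowCongr (Equiv.sumCompl (fun x => x ∈ Y)).symm (Equiv.refl X)).trans
        (Equiv.sumArrowEquivProdArrow _ _ _)) (fun α => ?_)
    have hE : ((((Equiv.arrowCongr (Equiv.sumCompl (fun x => x ∈ Y)).symm
        (Equiv.refl X)).trans (Equiv.sumArrowEquivProdArrow _ _ _))) α).1
          = fun y : {x // x ∈ Y} => α y.1 := by
      funext y
      simp [Equiv.sumArrowEquivProdArrow]
    rw [hE, himg α]
    constructor
    · rintro ⟨h1, h2⟩; exact ⟨fun y => h1 y.1 y.2, h2⟩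
    · rintro ⟨h1, h2⟩; exact ⟨fun y hy => h1 ⟨y, hy⟩, h2⟩
  rw [Fintype.card_congr e1,
    Fintype.card_congr (Equiv.prodSubtypeFstEquivSubtypeProd
      (p := fun f : {x // x ∈ Y} → X =>
        (∀ y : {x // x ∈ Y}, f y ∈ Z) ∧ (Finset.image f Finset.univ).card = r)),
    Fintype.card_prod]
  -- complement factor
  have hcompl : Fintype.card ({x // ¬ x ∈ Y} → X) = n ^ (n - m) := by
    rw [Fintype.card_fun, Fintype.card_subtype_compl, Fintype.card_coe, hm, hn]
  rw [hcompl]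
  -- restrict codomain to Z
  have e2 : {f : {x // x ∈ Y} → X //
        (∀ y : {x // x ∈ Y}, f y ∈ Z) ∧ (Finset.image f Finset.univ).card = r}
      ≃ {g : {x // x ∈ Y} → {x // x ∈ Z} // (Finset.image g Finset.univ).card = r} := by
    refine ⟨fun ⟨f, hf⟩ => ⟨fun y => ⟨f y, hf.1 y⟩, ?_⟩,
      fun ⟨g, hg⟩ => ⟨fun y => (g y).1, fun y => (g y).2, ?_⟩, ?_, ?_⟩
    · have : Finset.image f Finset.univ
          = Finset.image Subtype.val
              (Finset.image (fun y => (⟨f y, hf.1 y⟩ : {x // x ∈ Z})) Finset.univ) := by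
        rw [Finset.image_image]; rfl
      rw [this, Finset.card_image_of_injective _ Subtype.val_injective] at hf
      exact hf.2
    · have : Finset.image (fun y => (g y).1) Finset.univ
          = Finset.image Subtype.val (Finset.image g Finset.univ) := by
        rw [Finset.image_image]; rfl
      rw [this, Finset.card_image_of_injective _ Subtype.val_injective]
      exact hg
    · rintro ⟨f, hf⟩; rfl
    · rintro ⟨g, hg⟩; apply Subtype.ext; funext y; apply Subtype.ext; rfl
  rw [Fintype.card_congr e2]
  -- transport to Fin m → Fin k
  have eY : {x // x ∈ Y} ≃ Fin m := by
    apply Fintype.equivFinOfCardEq; rw [Fintype.card_coe, hm]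
  have eZ : {x // x ∈ Z} ≃ Fin k := by
    apply Fintype.equivFinOfCardEq; rw [Fintype.card_coe, hk]
  have e3 : {g : {x // x ∈ Y} → {x // x ∈ Z} // (Finset.image g Finset.univ).card = r}
      ≃ {h : Fin m → Fin k // (Finset.image h Finset.univ).card = r} := by
    refine Equiv.subtypeEquiv (Equiv.arrowCongr eY eZ) (fun g => ?_)
    have : (Equiv.arrowCongr eY eZ) g = ⇑eZ ∘ g ∘ ⇑eY.symm := rfl
    rw [this, card_image_transport]
  rw [Fintype.card_congr e3, card_image_card_eq, surjFin_eq]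
  ring
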